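/- Let H be a real Hilbert space and let T be a bounded linear operator on H with ‖T‖ = 1 such that M_T = S_{H₀} for some closed subspace H₀ of H, and suppose sup{‖Tz‖ : z ∈ H₀^⊥, ‖z‖ = 1} = ‖T‖. Then for every ε ∈ [0,1) there exists a bounded linear operator A on H with ‖A‖ = 1 such that T ⊥_B^ε A, while |⟨Tx, Ax⟩| > ε‖T‖‖A‖ for every x ∈ M_T. -/

import Mathlib

open RealInnerProductSpace

private lemma key_birkhoff {H : Type*} [NormedAddCommGroup H] [InnerProductSpace ℝ H]
    (T Y : H →L[ℝ] H) (hT : ‖T‖ = 1) :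
    ∃ d : ℝ, |d| ≤ ‖Y‖ ∧ ∀ t : ℝ, 1 ≤ ‖T + t • (Y - d • T)‖ := by
  classical
  set f : ℝ → ℝ := fun t => ‖T + t • Y‖ with hfdef
  have hf0 : f 0 = 1 := by simp [hfdef, hT]
  have hnsmul : ∀ t : ℝ, ‖t • Y‖ = |t| * ‖Y‖ := by
    intro t; rw [norm_smul t Y, Real.norm_eq_abs]
  have hfLB : ∀ t : ℝ, 1 - |t| * ‖Y‖ ≤ f t := by
    intro t
    have h1 : ‖T‖ ≤ ‖T + t • Y‖ + ‖t • Y‖ := by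
      simpa using norm_sub_le (T + t • Y) (t • Y)
    have h2 := hnsmul t
    simp only [hfdef]
    linarith [hT.le, hT.ge]
  have hfUB : ∀ t : ℝ, f t ≤ 1 + |t| * ‖Y‖ := by
    intro t
    have h1 : ‖T + t • Y‖ ≤ ‖T‖ + ‖t • Y‖ := norm_add_le _ _
    have h2 := hnsmul t
    simp only [hfdef]
    linarith [hT.le]
  set S : Set ℝ := {r | ∃ t : ℝ, 0 < t ∧ r = (f t - 1) / t} with hSdef
  have hSne : S.Nonempty := ⟨(f 1 - 1) / 1, 1, one_pos, rfl⟩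
  have hSbdd : BddBelow S := by
    refine ⟨-‖Y‖, ?_⟩
    rintro r ⟨t, ht, rfl⟩
    rw [le_div_iff₀ ht]
    have := hfLB t
    rw [abs_of_pos ht] at this
    nlinarith
  set d : ℝ := sInf S with hddef
  have hd_le : d ≤ ‖Y‖ := by
    have h1 : d ≤ (f 1 - 1) / 1 := csInf_le hSbdd ⟨1, one_pos, rfl⟩
    have h2 := hfUB 1
    rw [abs_one, one_mul] at h2
    rw [div_one] at h1
    linarith
  have hd_ge : -‖Y‖ ≤ d := by
    apply le_csInf hSne
    rintro r ⟨t, ht, rfl⟩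
    rw [le_div_iff₀ ht]
    have := hfLB t
    rw [abs_of_pos ht] at this
    nlinarith
  have habs : |d| ≤ ‖Y‖ := abs_le.mpr ⟨hd_ge, hd_le⟩
  have hconv : ∀ t s : ℝ, t < 0 → 0 < s → t * (f s - 1) ≤ s * (f t - 1) := by
    intro t s ht hs
    have hst : 0 < s - t := by linarith
    have heq : (s - t) • T = s • (T + t • Y) + (-t) • (T + s • Y) := by
      simp only [smul_add, smul_smul, sub_smul, neg_smul]
      module
    have hkey : (s - t) * ‖T‖ ≤ s * f t + (-t) * f s := by
      calc (s - t) * ‖T‖ = ‖(s - t) • T‖ := by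
            rw [norm_smul (s-t) T, Real.norm_eq_abs, abs_of_pos hst]
        _ ≤ ‖s • (T + t • Y)‖ + ‖(-t) • (T + s • Y)‖ := by
            rw [heq]; exact norm_add_le _ _
        _ = s * f t + (-t) * f s := by
            rw [norm_smul s (T + t • Y), norm_smul (-t) (T + s • Y), Real.norm_eq_abs, Real.norm_eq_abs,
              abs_of_pos hs, abs_of_pos (by linarith : (0:ℝ) < -t)]
    rw [hT] at hkey
    nlinarith
  have hkeyAll : ∀ u : ℝ, 1 + d * u ≤ f u := by
    intro u
    rcases lt_trichotomy u 0 with hu | hu | hu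
    · have hlb : (f u - 1) / u ≤ d := by
        apply le_csInf hSne
        rintro r ⟨s, hs, rfl⟩
        rw [div_le_iff_of_neg hu, div_mul_eq_mul_div, div_le_iff₀ hs]
        nlinarith [hconv u s hu hs]
      have h2 := mul_le_mul_of_nonpos_right hlb (le_of_lt hu)
      rw [div_mul_cancel₀ _ (ne_of_lt hu)] at h2
      linarith
    · simp [hu, hf0]
    · have h1 : d ≤ (f u - 1) / u := csInf_le hSbdd ⟨u, hu, rfl⟩
      rw [le_div_iff₀ hu] at h1
      linarith
  refine ⟨d, habs, ?_⟩
  intro t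
  have heq : T + t • (Y - d • T) = (1 - t * d) • T + t • Y := by
    simp only [smul_sub, smul_smul, sub_smul, one_smul]
    module
  rw [heq]
  by_cases hc : 0 < 1 - t * d
  · have heq2 : (1 - t * d) • T + t • Y = (1 - t * d) • (T + (t / (1 - t * d)) • Y) := by
      rw [smul_add, smul_smul, mul_div_cancel₀ _ (ne_of_gt hc)]
    rw [heq2, norm_smul (1 - t*d) (T + (t / (1 - t * d)) • Y), Real.norm_eq_abs, abs_of_pos hc]
    have hk := hkeyAll (t / (1 - t * d))
    have hone : (1 - t * d) * (1 + d * (t / (1 - t * d))) = 1 := by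
      field_simp; ring
    calc (1:ℝ) = (1 - t * d) * (1 + d * (t / (1 - t * d))) := hone.symm
      _ ≤ (1 - t * d) * ‖T + (t / (1 - t * d)) • Y‖ :=
          mul_le_mul_of_nonneg_left hk (le_of_lt hc)
  · push_neg at hc
    have h1 : ‖t • Y‖ ≤ ‖(1 - t * d) • T + t • Y‖ + ‖(1 - t * d) • T‖ := by
      have := norm_sub_le ((1 - t * d) • T + t • Y) ((1 - t * d) • T)
      simpa [add_sub_cancel_left] using this
    have h2 : ‖(1 - t * d) • T‖ = t * d - 1 := by
      rw [norm_smul (1 - t*d) T, Real.norm_eq_abs, hT, mul_one, abs_of_nonpos (by linarith)]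
      ring
    have h3 : t * d ≤ |t| * ‖Y‖ := by
      calc t * d ≤ |t * d| := le_abs_self _
        _ = |t| * |d| := abs_mul t d
        _ ≤ |t| * ‖Y‖ := mul_le_mul_of_nonneg_left habs (abs_nonneg t)
    have h4 := hnsmul t
    linarith

/-- If the norm attainment set of a norm-one bounded operator `T` on a real Hilbert
space is the unit sphere of a closed subspace `H₀` and the norm of `T` restricted
to `H₀ᗮ` equals `‖T‖`, then for every `ε ∈ [0,1)` there is a norm-one operator `A`
with `T ⊥_B^ε A` but `|⟨Tx, Ax⟩| > ε‖T‖‖A‖` for every norm attaining unit vector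
`x` of `T`. -/
theorem exists_counterexample_of_norm_on_orthogonal_complement
    {H : Type*} [NormedAddCommGroup H] [InnerProductSpace ℝ H] [CompleteSpace H]
    (T : H →L[ℝ] H) (hTnorm : ‖T‖ = 1)
    (H₀ : Submodule ℝ H) (hclosed : IsClosed (H₀ : Set H))
    (hMT : {x : H | ‖x‖ = 1 ∧ ‖T x‖ = ‖T‖} = {x : H | x ∈ H₀ ∧ ‖x‖ = 1})
    (hsup : sSup {r : ℝ | ∃ z ∈ H₀ᗮ, ‖z‖ = 1 ∧ r = ‖T z‖} = ‖T‖)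
    (ε : ℝ) (hε0 : 0 ≤ ε) (hε1 : ε < 1) :
    ∃ A : H →L[ℝ] H, ‖A‖ = 1 ∧
      (∀ l : ℝ, ‖T + l • A‖ ^ 2 ≥ ‖T‖ ^ 2 - 2 * ε * ‖T‖ * ‖l • A‖) ∧
      (∀ x : H, ‖x‖ = 1 → ‖T x‖ = ‖T‖ → |⟪T x, A x⟫| > ε * ‖T‖ * ‖A‖) := by
  by_cases hne : ∃ x, x ∈ H₀ ∧ ‖x‖ = 1
  · -- H₀ contains a unit vector
    obtain ⟨x₀, hx₀, hx₀1⟩ := hne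
    haveI : CompleteSpace H₀ := hclosed.completeSpace_coe
    set A : H →L[ℝ] H := T.comp (H₀.subtypeL.comp (H₀.orthogonalProjectionOnto)) with hA
    have hAx : ∀ x : H, A x = T ((H₀.orthogonalProjectionOnto x : H)) := fun x => rfl
    have hself : ∀ x : H, x ∈ H₀ → A x = T x := by
      intro x hx
      rw [hAx, ← Submodule.starProjection_apply, Submodule.starProjection_eq_self_iff.mpr hx]
    have hx₀M : ‖T x₀‖ = ‖T‖ := ((Set.ext_iff.mp hMT x₀).mpr ⟨hx₀, hx₀1⟩).2
    have hAle : ‖A‖ ≤ 1 := by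
      apply ContinuousLinearMap.opNorm_le_bound _ zero_le_one
      intro x
      rw [hAx]
      have h1 : ‖(H₀.orthogonalProjectionOnto x : H)‖ ≤ ‖x‖ := by
        have := (H₀.orthogonalProjectionOnto).le_opNorm x
        have h2 := Submodule.orthogonalProjectionOnto_norm_le H₀
        calc ‖(H₀.orthogonalProjectionOnto x : H)‖ = ‖H₀.orthogonalProjectionOnto x‖ := rfl
          _ ≤ ‖H₀.orthogonalProjectionOnto‖ * ‖x‖ := this
          _ ≤ 1 * ‖x‖ := by nlinarith [norm_nonneg x]
          _ = ‖x‖ := one_mul _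
      calc ‖T ((H₀.orthogonalProjectionOnto x : H))‖
          ≤ ‖T‖ * ‖(H₀.orthogonalProjectionOnto x : H)‖ := T.le_opNorm _
        _ ≤ 1 * ‖x‖ := by rw [hTnorm, one_mul, one_mul]; exact h1
    have hAge : 1 ≤ ‖A‖ := by
      have h1 : ‖A x₀‖ ≤ ‖A‖ * ‖x₀‖ := A.le_opNorm x₀
      rw [hself x₀ hx₀, hx₀M, hTnorm, hx₀1, mul_one] at h1
      exact h1
    have hAnorm : ‖A‖ = 1 := le_antisymm hAle hAge
    have hlow : ∀ l : ℝ, 1 ≤ ‖T + l • A‖ := by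
      intro l
      have h := Real.sSup_le (s := {r : ℝ | ∃ z ∈ H₀ᗮ, ‖z‖ = 1 ∧ r = ‖T z‖})
        (a := ‖T + l • A‖) ?_ (norm_nonneg _)
      · rw [hsup, hTnorm] at h; exact h
      · rintro r ⟨z, hz, hz1, rfl⟩
        have hPz : ((H₀.orthogonalProjectionOnto z : H)) = 0 := by
          rw [Submodule.orthogonalProjectionOnto_apply_of_mem_orthogonal hz]
          simp
        have hAz : A z = 0 := by rw [hAx, hPz, map_zero]
        have heq : (T + l • A) z = T z := by
          simp [ContinuousLinearMap.add_apply, ContinuousLinearMap.smul_apply, hAz]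
        calc ‖T z‖ = ‖(T + l • A) z‖ := by rw [heq]
          _ ≤ ‖T + l • A‖ * ‖z‖ := (T + l • A).le_opNorm z
          _ = ‖T + l • A‖ := by rw [hz1, mul_one]
    refine ⟨A, hAnorm, ?_, ?_⟩
    · intro l
      have h1 := hlow l
      rw [hTnorm]
      nlinarith [norm_nonneg (l • A), mul_nonneg hε0 (norm_nonneg (l • A))]
    · intro x hx1 hxT
      have hxH : x ∈ H₀ := ((Set.ext_iff.mp hMT x).mp ⟨hx1, hxT⟩).1
      rw [hself x hxH, real_inner_self_eq_norm_mul_norm, hxT, hTnorm, hAnorm]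
      simp only [mul_one]
      rw [abs_one]
      linarith
  · -- H₀ has no unit vector: the norm attainment set is empty
    have hMTempty : ∀ x : H, ‖x‖ = 1 → ‖T x‖ = ‖T‖ → False := by
      intro x hx1 hxT
      exact hne ⟨x, ((Set.ext_iff.mp hMT x).mp ⟨hx1, hxT⟩).1, hx1⟩
    have hT0 : T ≠ 0 := by
      intro h; rw [h, norm_zero] at hTnorm; exact one_ne_zero hTnorm.symm
    obtain ⟨v, hv⟩ : ∃ v : H, T v ≠ 0 := by
      by_contra h
      push_neg at h
      exact hT0 (ContinuousLinearMap.ext fun x => by rw [h x]; rfl)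
    have hv0 : v ≠ 0 := fun h => hv (by rw [h, map_zero])
    set e : H := ‖v‖⁻¹ • v with he_def
    have he : ‖e‖ = 1 := by
      rw [he_def, norm_smul, Real.norm_eq_abs, abs_of_nonneg (inv_nonneg.mpr (norm_nonneg v)),
        inv_mul_cancel₀ (norm_ne_zero_iff.mpr hv0)]
    set Y : H →L[ℝ] H := (innerSL ℝ e).smulRight e with hY_def
    have hYx : ∀ x : H, Y x = ⟪e, x⟫ • e := fun x => rfl
    obtain ⟨d, hd, hkey⟩ := key_birkhoff T Y hTnorm
    set Z : H →L[ℝ] H := Y - d • T with hZ_def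
    have hZ : Z ≠ 0 := by
      intro h0
      have hYdT : Y = d • T := by rwa [sub_eq_zero] at h0
      by_cases hd0 : d = 0
      · have h1 : Y e = (0 : H →L[ℝ] H) e := by rw [hYdT, hd0, zero_smul]
        rw [hYx, real_inner_self_eq_norm_mul_norm, he, one_mul, one_smul,
          ContinuousLinearMap.zero_apply] at h1
        rw [h1, norm_zero] at he
        exact one_ne_zero he.symm
      · have hTe : T e = d⁻¹ • e := by
          have h1 : Y e = d • T e := by rw [hYdT]; rfl
          rw [hYx, real_inner_self_eq_norm_mul_norm, he, one_mul, one_smul] at h1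
          have h2 := congrArg (fun w : H => d⁻¹ • w) h1
          simp only [smul_smul, inv_mul_cancel₀ hd0, one_smul] at h2
          exact h2.symm
        have hTle : ‖T‖ ≤ |d|⁻¹ := by
          apply ContinuousLinearMap.opNorm_le_bound _ (inv_nonneg.mpr (abs_nonneg d))
          intro x
          have h1 : T x = d⁻¹ • Y x := by
            rw [hYdT, ContinuousLinearMap.smul_apply, smul_smul, inv_mul_cancel₀ hd0, one_smul]
          rw [h1, hYx, norm_smul, norm_smul, Real.norm_eq_abs, Real.norm_eq_abs, abs_inv, he,
            mul_one]
          have h2 : |⟪e, x⟫| ≤ ‖x‖ := by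
            have := abs_real_inner_le_norm e x
            rw [he, one_mul] at this
            exact this
          exact mul_le_mul_of_nonneg_left h2 (inv_nonneg.mpr (abs_nonneg d))
        have hTeN : ‖T e‖ = |d|⁻¹ := by
          rw [hTe, norm_smul, Real.norm_eq_abs, abs_inv, he, mul_one]
        have hTeM : ‖T e‖ = ‖T‖ := by
          have h1 : ‖T e‖ ≤ ‖T‖ := by
            have := T.le_opNorm e; rwa [he, mul_one] at this
          exact le_antisymm h1 (hTeN ▸ hTle)
        exact hMTempty e he hTeM
    set A : H →L[ℝ] H := ‖Z‖⁻¹ • Z with hA_def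
    have hZn : ‖Z‖ ≠ 0 := norm_ne_zero_iff.mpr hZ
    have hAnorm : ‖A‖ = 1 := by
      rw [hA_def, norm_smul ‖Z‖⁻¹ Z, Real.norm_eq_abs,
        abs_of_nonneg (inv_nonneg.mpr (norm_nonneg Z)), inv_mul_cancel₀ hZn]
    have hlow : ∀ l : ℝ, 1 ≤ ‖T + l • A‖ := by
      intro l
      have heq : T + l • A = T + (l * ‖Z‖⁻¹) • (Y - d • T) := by
        rw [hA_def, smul_smul, hZ_def]
      rw [heq]
      exact hkey _
    refine ⟨A, hAnorm, ?_, ?_⟩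
    · intro l
      have h1 := hlow l
      rw [hTnorm]
      nlinarith [norm_nonneg (l • A), mul_nonneg hε0 (norm_nonneg (l • A))]
    · intro x hx1 hxT
      exact absurd (hMTempty x hx1 hxT) not_false
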